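/- Assume: (A2) the program (P_b) has a unique optimal solution x = x*(b); (B1) G_n = r_n(b_n − b) converges in distribution to a random vector G whose law is absolutely continuous with respect to Lebesgue measure on ℝ^m, where r_n → ∞; and (B2) ℙ(OPT(b_n) ≠ ∅) → 1. Define Pos(x) = {i ∈ {1,…,d} : x_i > 0} and TZ(x) = {1,…,d} \ ∪{I : I a basis with Aᵀλ(I) ≤ c and x(I,b) = x} (the coordinates not belonging to any dual feasible basis inducing x). Then for any measurable choice x*(b_n) of an element of OPT(b_n): ℙ(x*(b_n)_i = 0 for all i ∈ TZ(x)) → 1 and ℙ(x*(b_n)_i > 0 for all i ∈ Pos(x)) → 1 as n → ∞. -/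

import Mathlib

open Matrix

noncomputable section

variable {m d : ℕ}

/-- The primal feasible set `P(b) = {x : A x = b, x ≥ 0}`. -/
def feasSet (A : Matrix (Fin m) (Fin d) ℝ) (b : Fin m → ℝ) : Set (Fin d → ℝ) :=
  {x | A *ᵥ x = b ∧ ∀ i, 0 ≤ x i}

/-- The optimality set `OPT(b)` of the primal program `(P_b)`. -/
def optSet (A : Matrix (Fin m) (Fin d) ℝ) (b : Fin m → ℝ) (c : Fin d → ℝ) :
    Set (Fin d → ℝ) :=
  {x | x ∈ feasSet A b ∧ ∀ y ∈ feasSet A b, c ⬝ᵥ x ≤ c ⬝ᵥ y}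

/-- The dual feasible set `{λ : Aᵀ λ ≤ c}`. -/
def dualFeasSet (A : Matrix (Fin m) (Fin d) ℝ) (c : Fin d → ℝ) : Set (Fin m → ℝ) :=
  {l | ∀ j, (Aᵀ *ᵥ l) j ≤ c j}

/-- The set of optimal solutions of the dual program `(D_b)`. -/
def dualOptSet (A : Matrix (Fin m) (Fin d) ℝ) (b : Fin m → ℝ) (c : Fin d → ℝ) :
    Set (Fin m → ℝ) :=
  {l | l ∈ dualFeasSet A c ∧ ∀ mu ∈ dualFeasSet A c, b ⬝ᵥ mu ≤ b ⬝ᵥ l}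

/-- The submatrix `A_I` of the columns indexed by `I`, where the subset
`I ⊆ {1,…,d}` of cardinality `m` is encoded by the strictly monotone
enumeration `e : Fin m → Fin d` of its elements. -/
def subMat (A : Matrix (Fin m) (Fin d) ℝ) (e : Fin m → Fin d) :
    Matrix (Fin m) (Fin m) ℝ :=
  A.submatrix id e

/-- `e` encodes a basis: a subset of size `m` of the columns (strictly monotone
enumeration) whose corresponding submatrix `A_I` is invertible. -/
def IsBasis (A : Matrix (Fin m) (Fin d) ℝ) (e : Fin m → Fin d) : Prop :=
  StrictMono e ∧ IsUnit (subMat A e).det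

/-- The primal basic solution `x(I, v)`: equal to `(A_I)⁻¹ v` on the coordinates
in `I` and `0` elsewhere. -/
def basicSol (A : Matrix (Fin m) (Fin d) ℝ) (e : Fin m → Fin d) (v : Fin m → ℝ) :
    Fin d → ℝ :=
  fun i => ∑ j, if e j = i then ((subMat A e)⁻¹ *ᵥ v) j else 0

/-- The dual basic solution `λ(I) = (A_I)⁻ᵀ c_I`. -/
def dualSol (A : Matrix (Fin m) (Fin d) ℝ) (c : Fin d → ℝ) (e : Fin m → Fin d) :
    Fin m → ℝ :=
  ((subMat A e)ᵀ)⁻¹ *ᵥ fun j => c (e j)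

/-- `I` is a dual feasible basis: `Aᵀ λ(I) ≤ c`. -/
def DualFeasibleBasis (A : Matrix (Fin m) (Fin d) ℝ) (c : Fin d → ℝ)
    (e : Fin m → Fin d) : Prop :=
  IsBasis A e ∧ ∀ j, (Aᵀ *ᵥ dualSol A c e) j ≤ c j

/-- `I` is a primal feasible basis for `(P_b)`: `x(I,b) ≥ 0`. -/
def PrimalFeasibleBasis (A : Matrix (Fin m) (Fin d) ℝ) (b : Fin m → ℝ)
    (e : Fin m → Fin d) : Prop :=
  IsBasis A e ∧ ∀ i, 0 ≤ basicSol A e b i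


section AuxLP

variable {A : Matrix (Fin m) (Fin d) ℝ} {b c : Fin d → ℝ}

lemma basicSol_eq_zero (A : Matrix (Fin m) (Fin d) ℝ) (e : Fin m → Fin d)
    (v : Fin m → ℝ) {i : Fin d} (hi : i ∉ Set.range e) : basicSol A e v i = 0 := by
  unfold basicSol
  refine Finset.sum_eq_zero fun j _ => ?_
  rw [if_neg]
  exact fun h => hi ⟨j, h⟩

lemma basicSol_apply (A : Matrix (Fin m) (Fin d) ℝ) {e : Fin m → Fin d}
    (he : Function.Injective e) (v : Fin m → ℝ) (j : Fin m) :
    basicSol A e v (e j) = ((subMat A e)⁻¹ *ᵥ v) j := by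
  unfold basicSol
  rw [Finset.sum_eq_single j]
  · simp
  · intro j' _ hj'
    rw [if_neg fun h => hj' (he h)]
  · simp

lemma mulVec_basicSol {e : Fin m → Fin d} (hdet : IsUnit (subMat A e).det)
    (v : Fin m → ℝ) : A *ᵥ basicSol A e v = v := by
  ext k
  have : (A *ᵥ basicSol A e v) k = (subMat A e *ᵥ ((subMat A e)⁻¹ *ᵥ v)) k := by
    simp only [mulVec, dotProduct, basicSol, Finset.mul_sum, mul_ite, mul_zero]
    rw [Finset.sum_comm]
    refine Finset.sum_congr rfl fun j _ => ?_
    rw [Finset.sum_ite_eq]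
    simp [subMat]
  rw [this, Matrix.mulVec_mulVec, Matrix.mul_nonsing_inv _ hdet, Matrix.one_mulVec]

lemma basicSol_nonneg {e : Fin m → Fin d} {v : Fin m → ℝ}
    (h : ∀ j, 0 ≤ ((subMat A e)⁻¹ *ᵥ v) j) (i : Fin d) : 0 ≤ basicSol A e v i := by
  refine Finset.sum_nonneg fun j _ => ?_
  split <;> simp [h j]

lemma eq_basicSol {e : Fin m → Fin d} (he : Function.Injective e)
    (hdet : IsUnit (subMat A e).det) {x : Fin d → ℝ} {v : Fin m → ℝ}
    (hsupp : ∀ i, i ∉ Set.range e → x i = 0) (hx : A *ᵥ x = v) :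
    x = basicSol A e v := by
  have key : subMat A e *ᵥ (fun j => x (e j)) = v := by
    ext k
    rw [← hx]
    simp only [mulVec, dotProduct, subMat, submatrix_apply, id_eq]
    rw [← Finset.sum_subset (Finset.subset_univ (Finset.univ.image e))]
    · rw [Finset.sum_image (fun a _ b _ h => he h)]
    · intro i _ hi
      rw [hsupp i (by simpa using fun j => fun h => hi (Finset.mem_image.2 ⟨j, Finset.mem_univ j, h⟩)), mul_zero]
  have hy : (fun j => x (e j)) = (subMat A e)⁻¹ *ᵥ v := by
    rw [← key, Matrix.mulVec_mulVec, Matrix.nonsing_inv_mul _ hdet, Matrix.one_mulVec]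
  ext i
  by_cases hi : i ∈ Set.range e
  · obtain ⟨j, rfl⟩ := hi
    rw [basicSol_apply A he, ← hy]
  · rw [hsupp i hi, basicSol_eq_zero A e v hi]

lemma dotProduct_basicSol {e : Fin m → Fin d} (he : Function.Injective e)
    (hdet : IsUnit (subMat A e).det) (c : Fin d → ℝ) (v : Fin m → ℝ) :
    c ⬝ᵥ basicSol A e v = v ⬝ᵥ dualSol A c e := by
  have h1 : c ⬝ᵥ basicSol A e v = (fun j => c (e j)) ⬝ᵥ ((subMat A e)⁻¹ *ᵥ v) := by
    simp only [dotProduct, basicSol, Finset.mul_sum]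
    rw [Finset.sum_comm]
    refine Finset.sum_congr rfl fun j _ => ?_
    rw [Finset.sum_eq_single (e j)]
    · simp
    · intro i _ hi; rw [if_neg (Ne.symm hi), mul_zero]
    · simp
  rw [h1, dualSol, Matrix.dotProduct_mulVec, dotProduct_comm]
  congr 1
  rw [← Matrix.transpose_nonsing_inv]
  ext j
  rw [Matrix.mulVec_transpose]

lemma weak_duality {l : Fin m → ℝ} (hl : l ∈ dualFeasSet A c) {x : Fin d → ℝ}
    {v : Fin m → ℝ} (hx : x ∈ feasSet A v) : v ⬝ᵥ l ≤ c ⬝ᵥ x := by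
  have h1 : v ⬝ᵥ l = (Aᵀ *ᵥ l) ⬝ᵥ x := by
    rw [← hx.1, dotProduct_comm (Aᵀ *ᵥ l) x, Matrix.dotProduct_mulVec,
      Matrix.vecMul_transpose, dotProduct_comm]
  rw [h1]
  exact Finset.sum_le_sum fun i _ => mul_le_mul_of_nonneg_right (hl i) (hx.2 i)

lemma basicSol_mem_optSet {e : Fin m → Fin d} (he : DualFeasibleBasis A c e)
    {v : Fin m → ℝ} (hpos : ∀ i, 0 ≤ basicSol A e v i) :
    basicSol A e v ∈ optSet A v c := by
  obtain ⟨⟨hmono, hdet⟩, hdual⟩ := he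
  refine ⟨⟨mulVec_basicSol hdet v, hpos⟩, fun y hy => ?_⟩
  rw [dotProduct_basicSol hmono.injective hdet]
  exact weak_duality hdual hy

end AuxLP

section Cone

variable {E : Type*} [NormedAddCommGroup E] [NormedSpace ℝ E] [FiniteDimensional ℝ E]
variable {ι : Type*} [Fintype ι]

/-- Unbundled linear independence of the family `v` restricted to the finset `s`. -/
def IndepOn (v : ι → E) (s : Finset ι) : Prop :=
  ∀ g : ι → ℝ, (∀ i ∉ s, g i = 0) → ∑ i, g i • v i = 0 → ∀ i, g i = 0

omit [FiniteDimensional ℝ E] in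
lemma sum_of_support {s : Finset ι} (t : ι → ℝ) (w : ι → E) (hs : ∀ i ∉ s, t i = 0) :
    ∑ i : ι, t i • w i = ∑ i ∈ s, t i • w i :=
  (Finset.sum_subset (Finset.subset_univ s)
    (fun i _ hi => by rw [hs i hi, zero_smul])).symm

omit [Fintype ι] [FiniteDimensional ℝ E] in
lemma sum_finset_eq_sum_fin (s : Finset ι) (f : ι → E) :
    ∑ i ∈ s, f i = ∑ j : Fin s.card, f (s.equivFin.symm j).1 := by
  rw [← Finset.sum_attach s f]
  exact Finset.sum_equiv s.equivFin (by simp) (by simp [Equiv.symm_apply_apply])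

lemma cone_caratheodory (v : ι → E) :
    ∀ (n : ℕ) (t : ι → ℝ), (Finset.univ.filter (fun i => t i ≠ 0)).card ≤ n →
      (∀ i, 0 ≤ t i) →
      ∃ s : Finset ι, IndepOn v s ∧
        ∃ u : ι → ℝ, (∀ i, 0 ≤ u i) ∧ (∀ i ∉ s, u i = 0) ∧
          ∑ i, u i • v i = ∑ i, t i • v i := by
  intro n
  induction n with
  | zero =>
    intro t hcard ht
    refine ⟨∅, fun g hg _ i => hg i (by simp), t, ht, ?_, rfl⟩
    intro i _
    by_contra h
    have : (Finset.univ.filter (fun i => t i ≠ 0)).card = 0 := Nat.le_zero.1 hcard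
    rw [Finset.card_eq_zero] at this
    exact absurd this (Finset.ne_empty_of_mem
      (Finset.mem_filter.2 ⟨Finset.mem_univ i, h⟩))
  | succ n ih =>
    intro t hcard ht
    by_cases hind : IndepOn v (Finset.univ.filter (fun i => t i ≠ 0))
    · refine ⟨_, hind, t, ht, ?_, rfl⟩
      intro i hi
      simp only [Finset.mem_filter, Finset.mem_univ, true_and, not_not] at hi
      exact hi
    · simp only [IndepOn, not_forall] at hind
      obtain ⟨g0, hg0supp, hg0sum, i0, hg0i⟩ := hind
      obtain ⟨G, hGsupp, hGsum, hGpos⟩ :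
          ∃ G : ι → ℝ, (∀ i ∉ Finset.univ.filter (fun i => t i ≠ 0), G i = 0) ∧
            ∑ i, G i • v i = 0 ∧ ∃ i, 0 < G i := by
        by_cases hpos : ∃ i, 0 < g0 i
        · exact ⟨g0, hg0supp, hg0sum, hpos⟩
        · refine ⟨-g0, fun i hi => by simp [hg0supp i hi],
            by simp only [Pi.neg_apply, neg_smul, Finset.sum_neg_distrib, hg0sum,
              neg_zero], ⟨i0, ?_⟩⟩
          push_neg at hpos
          simp only [Pi.neg_apply]
          rcases lt_or_eq_of_le (hpos i0) with h | h
          · linarith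
          · exact absurd h hg0i
      have hP : (Finset.univ.filter (fun i => 0 < G i)).Nonempty := by
        obtain ⟨i, hi⟩ := hGpos
        exact ⟨i, Finset.mem_filter.2 ⟨Finset.mem_univ _, hi⟩⟩
      obtain ⟨i1, hi1mem, hi1min⟩ := Finset.exists_min_image _ (fun i => t i / G i) hP
      have hGi1 : 0 < G i1 := (Finset.mem_filter.1 hi1mem).2
      have hτ0 : 0 ≤ t i1 / G i1 := div_nonneg (ht i1) hGi1.le
      set τ : ℝ := t i1 / G i1 with hτ
      have ht'0 : ∀ i, 0 ≤ t i - τ * G i := by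
        intro i
        by_cases h : 0 < G i
        · have h1 := hi1min i (Finset.mem_filter.2 ⟨Finset.mem_univ _, h⟩)
          have h2 : τ * G i ≤ (t i / G i) * G i := mul_le_mul_of_nonneg_right h1 h.le
          rw [div_mul_cancel₀ _ h.ne'] at h2
          linarith
        · push_neg at h
          have h2 : τ * G i ≤ 0 := mul_nonpos_of_nonneg_of_nonpos hτ0 h
          have := ht i
          linarith
      have ht'sum : ∑ i, (t i - τ * G i) • v i = ∑ i, t i • v i := by
        simp only [sub_smul, Finset.sum_sub_distrib, mul_smul]
        rw [← Finset.smul_sum, hGsum, smul_zero, sub_zero]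
      have hsub : Finset.univ.filter (fun i => (t i - τ * G i) ≠ 0) ⊂
          Finset.univ.filter (fun i => t i ≠ 0) := by
        constructor
        · intro i hi
          simp only [Finset.mem_filter, Finset.mem_univ, true_and] at hi ⊢
          intro h
          refine hi ?_
          rw [h, hGsupp i (by simp [h]), mul_zero, sub_zero]
        · intro hsub'
          have hi1s : i1 ∈ Finset.univ.filter (fun i => t i ≠ 0) := by
            by_contra h
            exact hGi1.ne' (hGsupp i1 h)
          have := hsub' hi1s
          simp only [Finset.mem_filter, Finset.mem_univ, true_and] at this
          exact this (by rw [hτ, div_mul_cancel₀ _ hGi1.ne', sub_self])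
      have hcard' : (Finset.univ.filter (fun i => (t i - τ * G i) ≠ 0)).card ≤ n := by
        have h1 := Finset.card_lt_card hsub
        omega
      obtain ⟨s', h1, u, h2, h3, h4⟩ := ih (fun i => t i - τ * G i) hcard' ht'0
      exact ⟨s', h1, u, h2, h3, by rw [h4, ht'sum]⟩

lemma fg_cone_isClosed (v : ι → E) :
    IsClosed {x : E | ∃ t : ι → ℝ, (∀ i, 0 ≤ t i) ∧ x = ∑ i, t i • v i} := by
  classical
  have key : {x : E | ∃ t : ι → ℝ, (∀ i, 0 ≤ t i) ∧ x = ∑ i, t i • v i} =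
      ⋃ s ∈ {s : Finset ι | IndepOn v s},
        (Fintype.linearCombination ℝ (fun j : Fin s.card => v (s.equivFin.symm j).1)) ''
          {w | ∀ j, 0 ≤ w j} := by
    ext x
    simp only [Set.mem_setOf_eq, Set.mem_iUnion, Set.mem_image, exists_prop]
    constructor
    · rintro ⟨t, ht, rfl⟩
      obtain ⟨s, hind, u, hu, husupp, husum⟩ :=
        cone_caratheodory v (Finset.univ.filter (fun i => t i ≠ 0)).card t le_rfl ht
      refine ⟨s, hind, fun j => u (s.equivFin.symm j).1, fun j => hu _, ?_⟩
      rw [Fintype.linearCombination_apply, ← husum, sum_of_support u v husupp,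
        sum_finset_eq_sum_fin s (fun i => u i • v i)]
    · rintro ⟨s, _, w, hw, rfl⟩
      refine ⟨fun i => if h : i ∈ s then w (s.equivFin ⟨i, h⟩) else 0, fun i => ?_, ?_⟩
      · by_cases h : i ∈ s
        · simpa [dif_pos h] using hw _
        · simp [dif_neg h]
      · rw [Fintype.linearCombination_apply,
          sum_of_support _ v (fun i hi => dif_neg hi),
          sum_finset_eq_sum_fin s (fun i =>
            (if h : i ∈ s then w (s.equivFin ⟨i, h⟩) else 0) • v i)]
        refine Finset.sum_congr rfl fun j _ => ?_
        rw [dif_pos (s.equivFin.symm j).2]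
        simp only [Subtype.coe_eta, Equiv.apply_symm_apply]
  rw [key]
  refine Set.Finite.isClosed_biUnion (Set.toFinite _) fun s hs => ?_
  have hker : LinearMap.ker (Fintype.linearCombination ℝ
      (fun j : Fin s.card => v (s.equivFin.symm j).1)) = ⊥ := by
    rw [LinearMap.ker_eq_bot']
    intro w hw
    rw [Fintype.linearCombination_apply] at hw
    have hW : ∀ i, (if h : i ∈ s then w (s.equivFin ⟨i, h⟩) else 0) = 0 := by
      refine hs _ (fun i hi => dif_neg hi) ?_
      rw [sum_of_support _ v (fun i hi => dif_neg hi),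
        sum_finset_eq_sum_fin s (fun i =>
          (if h : i ∈ s then w (s.equivFin ⟨i, h⟩) else 0) • v i), ← hw]
      refine Finset.sum_congr rfl fun j _ => ?_
      rw [dif_pos (s.equivFin.symm j).2]
      simp only [Subtype.coe_eta, Equiv.apply_symm_apply]
    funext j
    have := hW (s.equivFin.symm j).1
    rw [dif_pos (s.equivFin.symm j).2] at this
    simpa using this
  have hce := LinearMap.isClosedEmbedding_of_injective hker
  refine hce.isClosedMap _ ?_
  have : {w : Fin s.card → ℝ | ∀ j, 0 ≤ w j} = ⋂ j, {w | 0 ≤ w j} := by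
    ext w; simp
  rw [this]
  exact isClosed_iInter fun j => isClosed_le continuous_const (continuous_apply j)

omit [FiniteDimensional ℝ E] in
lemma fg_cone_convex (v : ι → E) :
    Convex ℝ {x : E | ∃ t : ι → ℝ, (∀ i, 0 ≤ t i) ∧ x = ∑ i, t i • v i} := by
  rintro x ⟨t1, ht1, rfl⟩ y ⟨t2, ht2, rfl⟩ a b ha hb hab
  refine ⟨fun i => a * t1 i + b * t2 i, fun i =>
    add_nonneg (mul_nonneg ha (ht1 i)) (mul_nonneg hb (ht2 i)), ?_⟩
  rw [Finset.smul_sum, Finset.smul_sum, ← Finset.sum_add_distrib]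
  refine Finset.sum_congr rfl fun i _ => ?_
  rw [smul_smul, smul_smul, ← add_smul]

end Cone

section Farkas

variable {d : ℕ}

lemma farkas_alternative {ι : Type*} [Fintype ι] (v : ι → (Fin d → ℝ)) (c : Fin d → ℝ)
    (h : ¬ ∃ t : ι → ℝ, (∀ i, 0 ≤ t i) ∧ c = ∑ i, t i • v i) :
    ∃ w : Fin d → ℝ, (∀ i, v i ⬝ᵥ w ≤ 0) ∧ 0 < c ⬝ᵥ w := by
  classical
  have hc : c ∉ {x : Fin d → ℝ | ∃ t : ι → ℝ, (∀ i, 0 ≤ t i) ∧ x = ∑ i, t i • v i} := h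
  obtain ⟨f, u, hfu, huc⟩ :=
    geometric_hahn_banach_closed_point (fg_cone_convex v) (fg_cone_isClosed v) hc
  have hu0 : 0 < u := by
    have := hfu 0 ⟨0, fun i => le_rfl, by simp⟩
    simpa using this
  have hfv : ∀ i, f (v i) ≤ 0 := by
    intro i
    by_contra hpos
    push_neg at hpos
    have hmem : ∀ r : ℝ, 0 ≤ r → r • v i ∈
        {x : Fin d → ℝ | ∃ t : ι → ℝ, (∀ i, 0 ≤ t i) ∧ x = ∑ i, t i • v i} := by
      intro r hr
      refine ⟨fun j => if j = i then r else 0, fun j => ?_, ?_⟩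
      · by_cases hj : j = i <;> simp [hj, hr]
      · simp [ite_smul, Finset.sum_ite_eq']
    have hr : (0:ℝ) ≤ (u + 1) / f (v i) := div_nonneg (by linarith) hpos.le
    have h2 := hfu _ (hmem _ hr)
    rw [ContinuousLinearMap.map_smul, smul_eq_mul, div_mul_cancel₀ _ hpos.ne'] at h2
    linarith
  set w : Fin d → ℝ := fun j => f (fun k => if j = k then 1 else 0) with hw
  have hfw : ∀ x : Fin d → ℝ, f x = x ⬝ᵥ w := by
    intro x
    conv_lhs => rw [pi_eq_sum_univ x]
    rw [map_sum]
    refine Finset.sum_congr rfl fun j _ => ?_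
    rw [ContinuousLinearMap.map_smul, smul_eq_mul, hw]
  refine ⟨w, fun i => by rw [← hfw]; exact hfv i, ?_⟩
  rw [← hfw]
  linarith

end Farkas


section AuxLP2

lemma sum_finset_eqv {ι M : Type*} [AddCommMonoid M] (s : Finset ι) {k : ℕ}
    (eqv : {i // i ∈ s} ≃ Fin k) (f : ι → M) :
    ∑ i ∈ s, f i = ∑ j : Fin k, f (eqv.symm j).1 := by
  rw [← Finset.sum_attach s f]
  exact Finset.sum_equiv eqv (by simp) (by simp [Equiv.symm_apply_apply])

lemma sum_smul_dotProduct {ι : Type*} [Fintype ι] (g : ι → ℝ)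
    (f : ι → (Fin m → ℝ)) (u : Fin m → ℝ) :
    (∑ i, g i • f i) ⬝ᵥ u = ∑ i, g i * (f i ⬝ᵥ u) := by
  simp only [dotProduct, Finset.sum_apply, Pi.smul_apply, smul_eq_mul,
    Finset.sum_mul, Finset.mul_sum]
  rw [Finset.sum_comm]
  exact Finset.sum_congr rfl fun i _ => Finset.sum_congr rfl fun k _ => by ring

variable {A : Matrix (Fin m) (Fin d) ℝ} {c : Fin d → ℝ}

lemma indepOn_ordered {F : Finset (Fin d)} (h : IndepOn (fun i => Aᵀ i) F)
    {k : ℕ} (hk : F.card = k) :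
    LinearIndependent ℝ (fun j : Fin k => Aᵀ ((F.orderIsoOfFin hk j : Fin d))) := by
  classical
  rw [Fintype.linearIndependent_iff]
  intro g hg
  set G : Fin d → ℝ := fun i => if hi : i ∈ F then g ((F.orderIsoOfFin hk).symm ⟨i, hi⟩)
    else 0 with hG
  have hGsupp : ∀ i ∉ F, G i = 0 := fun i hi => dif_neg hi
  have hval : ∀ x : {i // i ∈ F}, G x.1 = g ((F.orderIsoOfFin hk).symm x) := by
    intro x
    rw [hG]
    dsimp only
    rw [dif_pos x.2, Subtype.coe_eta]
  have hGsum : ∑ i, G i • (fun i => Aᵀ i) i = 0 := by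
    rw [sum_of_support G _ hGsupp,
      sum_finset_eqv F (F.orderIsoOfFin hk).toEquiv.symm (fun i => G i • Aᵀ i)]
    rw [← hg]
    refine Finset.sum_congr rfl fun j _ => ?_
    rw [Equiv.symm_symm]
    rw [hval ((F.orderIsoOfFin hk).toEquiv j)]
    simp
  have hG0 := h G hGsupp hGsum
  intro j
  have h2 := hG0 ((F.orderIsoOfFin hk) j).1
  rw [hval ((F.orderIsoOfFin hk) j)] at h2
  simpa using h2

lemma indepOn_card_le (h : IndepOn (fun i => Aᵀ i) F) : F.card ≤ m := by
  have hli := indepOn_ordered h (k := F.card) rfl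
  have := hli.fintype_card_le_finrank
  simpa [Module.finrank_pi] using this

lemma mulVec_surjective_of_rank (hA : A.rank = m) : Function.Surjective A.mulVec := by
  have : LinearMap.range A.mulVecLin = ⊤ := by
    apply Submodule.eq_top_of_finrank_eq
    rw [← Matrix.rank, hA, Module.finrank_pi]
    simp
  intro v
  obtain ⟨x, hx⟩ := LinearMap.range_eq_top.1 this v
  exact ⟨x, hx⟩

lemma transpose_mulVec_ne_zero (hA : A.rank = m) {u : Fin m → ℝ} (hu : u ≠ 0) :
    Aᵀ *ᵥ u ≠ 0 := by
  intro h
  apply hu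
  obtain ⟨x, hx⟩ := mulVec_surjective_of_rank hA u
  have h1 : u ⬝ᵥ (A *ᵥ x) = 0 := by
    rw [Matrix.dotProduct_mulVec, ← Matrix.mulVec_transpose, h, zero_dotProduct]
  rw [hx, dotProduct_self_eq_zero] at h1
  exact h1

lemma indepOn_insert {F : Finset (Fin d)} (h : IndepOn (fun i => Aᵀ i) F)
    {u : Fin m → ℝ} (htight : ∀ i ∈ F, Aᵀ i ⬝ᵥ u = 0) {i₁ : Fin d}
    (hi₁ : Aᵀ i₁ ⬝ᵥ u ≠ 0) (hi₁F : i₁ ∉ F) :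
    IndepOn (fun i => Aᵀ i) (insert i₁ F) := by
  intro g hgsupp hgsum
  have key : g i₁ = 0 := by
    have h1 : (∑ i, g i • Aᵀ i) ⬝ᵥ u = 0 := by rw [hgsum, zero_dotProduct]
    replace h1 : ∑ i, g i * (Aᵀ i ⬝ᵥ u) = 0 := (sum_smul_dotProduct g (fun i => Aᵀ i) u).symm.trans h1
    rw [Finset.sum_eq_single i₁] at h1
    · rcases mul_eq_zero.1 h1 with h | h
      · exact h
      · exact absurd h hi₁
    · intro i _ hi
      by_cases hiF : i ∈ F
      · rw [htight i hiF, mul_zero]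
      · rw [hgsupp i (by simp [hi, hiF]), zero_mul]
    · simp
  have hgsupp' : ∀ i ∉ F, g i = 0 := by
    intro i hi
    by_cases hii : i = i₁
    · rw [hii]; exact key
    · exact hgsupp i (by simp [hii, hi])
  exact h g hgsupp' hgsum

lemma tight_dualSol_eq {e : Fin m → Fin d} (hdet : IsUnit (subMat A e).det)
    {l : Fin m → ℝ} (htight : ∀ j, (Aᵀ *ᵥ l) (e j) = c (e j)) :
    dualSol A c e = l := by
  have h1 : (subMat A e)ᵀ *ᵥ l = fun j => c (e j) := by
    ext j
    have := htight j
    rw [← this]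
    simp [mulVec, dotProduct, subMat, Matrix.transpose_apply, mul_comm]
  rw [dualSol, ← h1, Matrix.mulVec_mulVec, Matrix.nonsing_inv_mul, Matrix.one_mulVec]
  rwa [Matrix.det_transpose]

/-- The basis augmentation: a dual feasible `l`, tight on an independent set `F`,
can be completed to a dual feasible basis containing `F`. -/
lemma exists_dual_feasible_basis (hA : A.rank = m) :
    ∀ (k : ℕ) (F : Finset (Fin d)) (l : Fin m → ℝ), m - F.card ≤ k →
      l ∈ dualFeasSet A c → (∀ i ∈ F, (Aᵀ *ᵥ l) i = c i) →
      IndepOn (fun i => Aᵀ i) F →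
      ∃ e : Fin m → Fin d, DualFeasibleBasis A c e ∧ ∀ i ∈ F, i ∈ Set.range e := by
  intro k
  induction k with
  | zero =>
    intro F l hk hl htight hind
    have hcard : F.card = m := le_antisymm (indepOn_card_le hind) (by omega)
    set iso := F.orderIsoOfFin hcard with hiso
    set e : Fin m → Fin d := fun j => (iso j : Fin d) with he
    have hmono : StrictMono e := fun a b hab => by
      simpa [he] using iso.strictMono hab
    have hli : LinearIndependent ℝ (fun j : Fin m => Aᵀ (e j)) := indepOn_ordered hind hcard
    have hdet : IsUnit (subMat A e).det := by
      rw [← Matrix.isUnit_iff_isUnit_det, ← Matrix.linearIndependent_cols_iff_isUnit]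
      convert hli using 1
      · ext i j; rfl
      · rfl
    have hrange : ∀ i ∈ F, i ∈ Set.range e := by
      intro i hi
      exact ⟨iso.symm ⟨i, hi⟩, by simp [he]⟩
    have hds : dualSol A c e = l := by
      apply tight_dualSol_eq hdet
      intro j
      exact htight (e j) (iso j).2
    exact ⟨e, ⟨⟨hmono, hdet⟩, by rw [hds]; exact hl⟩, hrange⟩
  | succ k ih =>
    intro F l hk hl htight hind
    by_cases hcard : m - F.card ≤ k
    · exact ih F l hcard hl htight hind
    have hcardlt : F.card < m := by
      have := indepOn_card_le hind
      omega
    -- find u ≠ 0 orthogonal to the tight columns in F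
    obtain ⟨u, hu0, hutight⟩ : ∃ u : Fin m → ℝ, u ≠ 0 ∧ ∀ i ∈ F, Aᵀ i ⬝ᵥ u = 0 := by
      set φ : (Fin m → ℝ) →ₗ[ℝ] ({i // i ∈ F} → ℝ) :=
        { toFun := fun u => fun i => Aᵀ i.1 ⬝ᵥ u
          map_add' := fun x y => by ext i; simp [dotProduct_add]
          map_smul' := fun r x => by ext i; simp [dotProduct_smul] } with hφ
      have : LinearMap.ker φ ≠ ⊥ := by
        intro hker
        have hinj : Function.Injective φ := LinearMap.ker_eq_bot.1 hker
        have := LinearMap.finrank_le_finrank_of_injective hinj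
        rw [Module.finrank_pi, Module.finrank_pi] at this
        simp only [Fintype.card_fin, Fintype.card_coe] at this
        omega
      obtain ⟨u, humem, hune⟩ := Submodule.exists_mem_ne_zero_of_ne_bot this
      refine ⟨u, hune, fun i hi => ?_⟩
      have := LinearMap.mem_ker.1 humem
      have h2 := congrFun this ⟨i, hi⟩
      simpa [hφ] using h2
    -- wlog there is a column with positive pairing
    obtain ⟨u, hutight, i₀, hi₀pos⟩ :
        ∃ u : Fin m → ℝ, (∀ i ∈ F, Aᵀ i ⬝ᵥ u = 0) ∧ ∃ i₀, 0 < Aᵀ i₀ ⬝ᵥ u := by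
      have hne := transpose_mulVec_ne_zero hA hu0
      obtain ⟨i₀, hi₀⟩ : ∃ i₀, (Aᵀ *ᵥ u) i₀ ≠ 0 := by
        by_contra h
        push_neg at h
        exact hne (funext h)
      rcases lt_or_gt_of_ne hi₀ with h | h
      · refine ⟨-u, fun i hi => by simp [dotProduct_neg, hutight i hi], i₀, ?_⟩
        have hne2 : Aᵀ i₀ ⬝ᵥ (-u) = -((Aᵀ *ᵥ u) i₀) := by
          rw [dotProduct_neg]
          rfl
        rw [hne2]
        linarith
      · exact ⟨u, hutight, i₀, h⟩
    set Q : Finset (Fin d) := Finset.univ.filter (fun i => 0 < Aᵀ i ⬝ᵥ u) with hQ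
    have hQne : Q.Nonempty := ⟨i₀, by simp [hQ, hi₀pos]⟩
    obtain ⟨i₁, hi₁Q, hi₁min⟩ :=
      Finset.exists_min_image Q (fun i => (c i - (Aᵀ *ᵥ l) i) / (Aᵀ i ⬝ᵥ u)) hQne
    have hi₁pos : 0 < Aᵀ i₁ ⬝ᵥ u := (Finset.mem_filter.1 hi₁Q).2
    set τ : ℝ := (c i₁ - (Aᵀ *ᵥ l) i₁) / (Aᵀ i₁ ⬝ᵥ u) with hτ
    have hτ0 : 0 ≤ τ := div_nonneg (by have := hl i₁; linarith) hi₁pos.le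
    set l' : Fin m → ℝ := l + τ • u with hl'
    have hexp : ∀ i, (Aᵀ *ᵥ l') i = (Aᵀ *ᵥ l) i + τ * (Aᵀ i ⬝ᵥ u) := by
      intro i
      rw [hl', Matrix.mulVec_add, Matrix.mulVec_smul]
      rfl
    have hl'feas : l' ∈ dualFeasSet A c := by
      intro i
      rw [hexp i]
      by_cases hi : 0 < Aᵀ i ⬝ᵥ u
      · have hmin := hi₁min i (by simp [hQ, hi])
        have : τ * (Aᵀ i ⬝ᵥ u) ≤ ((c i - (Aᵀ *ᵥ l) i) / (Aᵀ i ⬝ᵥ u)) * (Aᵀ i ⬝ᵥ u) :=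
          mul_le_mul_of_nonneg_right hmin hi.le
        rw [div_mul_cancel₀ _ hi.ne'] at this
        linarith
      · push_neg at hi
        have h2 : τ * (Aᵀ i ⬝ᵥ u) ≤ 0 := mul_nonpos_of_nonneg_of_nonpos hτ0 hi
        have := hl i
        linarith
    have hi₁F : i₁ ∉ F := by
      intro hmem
      have := hutight i₁ hmem
      rw [this] at hi₁pos
      exact lt_irrefl 0 hi₁pos
    have htight' : ∀ i ∈ insert i₁ F, (Aᵀ *ᵥ l') i = c i := by
      intro i hi
      rcases Finset.mem_insert.1 hi with h | h
      · subst h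
        rw [hexp i, hτ, div_mul_cancel₀ _ hi₁pos.ne']
        ring
      · rw [hexp i, hutight i h, mul_zero, add_zero]
        exact htight i h
    have hind' : IndepOn (fun i => Aᵀ i) (insert i₁ F) :=
      indepOn_insert hind hutight hi₁pos.ne' hi₁F
    have hk' : m - (insert i₁ F).card ≤ k := by
      rw [Finset.card_insert_of_notMem hi₁F]
      omega
    obtain ⟨e, he1, he2⟩ := ih (insert i₁ F) l' hk' hl'feas htight' hind'
    exact ⟨e, he1, fun i hi => he2 i (Finset.mem_insert_of_mem hi)⟩

end AuxLP2

section AuxLP3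

variable {A : Matrix (Fin m) (Fin d) ℝ} {b c : Fin d → ℝ}

lemma dotProduct_add_smul (c x g : Fin d → ℝ) (t : ℝ) :
    c ⬝ᵥ (x + t • g) = c ⬝ᵥ x + t * (c ⬝ᵥ g) := by
  simp only [dotProduct, Pi.add_apply, Pi.smul_apply, smul_eq_mul, mul_add,
    Finset.sum_add_distrib, Finset.mul_sum]
  congr 1
  exact Finset.sum_congr rfl fun i _ => by ring

lemma exists_feas_perturb {A : Matrix (Fin m) (Fin d) ℝ} {b' : Fin m → ℝ}
    {x' w' : Fin d → ℝ} (hx : x' ∈ feasSet A b') (hw : A *ᵥ w' = 0)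
    (hnn : ∀ i, x' i = 0 → 0 ≤ w' i) :
    ∃ δ : ℝ, 0 < δ ∧ x' + δ • w' ∈ feasSet A b' := by
  classical
  set neg : Finset (Fin d) := Finset.univ.filter (fun i => w' i < 0) with hneg
  have hxpos : ∀ i ∈ neg, 0 < x' i := by
    intro i hi
    rcases lt_or_eq_of_le (hx.2 i) with h | h
    · exact h
    · exfalso
      have := hnn i h.symm
      have h2 := (Finset.mem_filter.1 hi).2
      linarith
  by_cases hne : neg.Nonempty
  · obtain ⟨i₁, hi₁, hmin⟩ := Finset.exists_min_image neg (fun i => x' i / (-w' i)) hne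
    set δ := x' i₁ / (-w' i₁) with hδ
    have hw1 : w' i₁ < 0 := (Finset.mem_filter.1 hi₁).2
    have hδpos : 0 < δ := div_pos (hxpos i₁ hi₁) (by linarith)
    refine ⟨δ, hδpos, ?_, ?_⟩
    · rw [Matrix.mulVec_add, Matrix.mulVec_smul, hw, smul_zero, add_zero]
      exact hx.1
    · intro i
      by_cases hwi : w' i < 0
      · have h1 := hmin i (Finset.mem_filter.2 ⟨Finset.mem_univ _, hwi⟩)
        have h2 : δ * (-w' i) ≤ (x' i / (-w' i)) * (-w' i) :=
          mul_le_mul_of_nonneg_right h1 (by linarith)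
        rw [div_mul_cancel₀ _ (by linarith : -w' i ≠ 0)] at h2
        simp only [Pi.add_apply, Pi.smul_apply, smul_eq_mul]
        linarith
      · push_neg at hwi
        simp only [Pi.add_apply, Pi.smul_apply, smul_eq_mul]
        have := hx.2 i
        nlinarith
  · refine ⟨1, one_pos, ?_, ?_⟩
    · rw [Matrix.mulVec_add, Matrix.mulVec_smul, hw, smul_zero, add_zero]
      exact hx.1
    · intro i
      have hwi : 0 ≤ w' i := by
        by_contra h
        push_neg at h
        exact hne ⟨i, Finset.mem_filter.2 ⟨Finset.mem_univ _, h⟩⟩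
      simp only [Pi.add_apply, Pi.smul_apply, smul_eq_mul]
      have := hx.2 i
      linarith

lemma exists_tight_dual {A : Matrix (Fin m) (Fin d) ℝ} {b' : Fin m → ℝ}
    {c : Fin d → ℝ} {x' : Fin d → ℝ} (hx : x' ∈ optSet A b' c) :
    ∃ l ∈ dualFeasSet A c, ∀ i, x' i ≠ 0 → (Aᵀ *ᵥ l) i = c i := by
  classical
  set v : ((Fin m) ⊕ (Fin m)) ⊕ (Fin d) → (Fin d → ℝ) := fun j =>
    Sum.elim (Sum.elim (fun k => fun i => A k i) (fun k => fun i => -A k i))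
      (fun i' => if x' i' = 0 then Pi.single i' (1:ℝ) else 0) j with hv
  by_cases hc : ∃ t : ((Fin m) ⊕ (Fin m)) ⊕ (Fin d) → ℝ, (∀ j, 0 ≤ t j) ∧ c = ∑ j, t j • v j
  · obtain ⟨t, ht, hsum⟩ := hc
    set l : Fin m → ℝ := fun k => t (Sum.inl (Sum.inl k)) - t (Sum.inl (Sum.inr k)) with hl
    have hci : ∀ i, c i = (Aᵀ *ᵥ l) i + (if x' i = 0 then t (Sum.inr i) else 0) := by
      intro i
      have h1 := congrFun hsum i
      rw [Finset.sum_apply] at h1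
      rw [Fintype.sum_sum_type] at h1
      rw [Fintype.sum_sum_type] at h1
      have h2 : ∀ k : Fin m, (t (Sum.inl (Sum.inl k)) • v (Sum.inl (Sum.inl k))) i
          = t (Sum.inl (Sum.inl k)) * A k i := by intro k; simp [hv]
      have h3 : ∀ k : Fin m, (t (Sum.inl (Sum.inr k)) • v (Sum.inl (Sum.inr k))) i
          = -(t (Sum.inl (Sum.inr k)) * A k i) := by intro k; simp [hv]; try ring
      have h4 : (∑ i' : Fin d, (t (Sum.inr i') • v (Sum.inr i')) i)
          = (if x' i = 0 then t (Sum.inr i) else 0) := by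
        rw [Finset.sum_eq_single i]
        · by_cases hxi : x' i = 0 <;> simp [hv, hxi]
        · intro i' _ hi'
          by_cases hxi : x' i' = 0 <;> simp [hv, hxi, Pi.single_apply, hi']
        · simp
      rw [Finset.sum_congr rfl (fun k _ => h2 k), Finset.sum_congr rfl
        (fun k _ => h3 k), h4] at h1
      have h5 : (Aᵀ *ᵥ l) i =
          ∑ k, t (Sum.inl (Sum.inl k)) * A k i - ∑ k, t (Sum.inl (Sum.inr k)) * A k i := by
        simp only [mulVec, dotProduct, Matrix.transpose_apply, hl]
        rw [← Finset.sum_sub_distrib]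
        exact Finset.sum_congr rfl fun k _ => by ring
      rw [h1, h5, Finset.sum_neg_distrib]
      ring
    refine ⟨l, fun i => ?_, fun i hxi => ?_⟩
    · rw [hci i]
      have : 0 ≤ (if x' i = 0 then t (Sum.inr i) else 0) := by
        split
        · exact ht _
        · exact le_refl 0
      linarith
    · rw [hci i, if_neg hxi, add_zero]
  · exfalso
    obtain ⟨w, hw, hcw⟩ := farkas_alternative v c hc
    have hAw : A *ᵥ w = 0 := by
      funext k
      have h1 := hw (Sum.inl (Sum.inl k))
      have h2 := hw (Sum.inl (Sum.inr k))
      have h3 : v (Sum.inl (Sum.inr k)) ⬝ᵥ w = -(v (Sum.inl (Sum.inl k)) ⬝ᵥ w) := by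
        simp only [hv, Sum.elim_inl, Sum.elim_inr]
        simp [dotProduct, neg_mul, Finset.sum_neg_distrib]
      rw [h3] at h2
      have h4 : v (Sum.inl (Sum.inl k)) ⬝ᵥ w = (A *ᵥ w) k := rfl
      rw [h4] at h1 h2
      simp only [Pi.zero_apply]
      linarith
    have hwle : ∀ i, x' i = 0 → w i ≤ 0 := by
      intro i hxi
      have h1 := hw (Sum.inr i)
      have h2 : v (Sum.inr i) ⬝ᵥ w = w i := by
        simp [hv, hxi, dotProduct, Pi.single_apply, Finset.sum_ite_eq']
      rwa [h2] at h1
    obtain ⟨δ, hδpos, hfeas⟩ := exists_feas_perturb hx.1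
      (show A *ᵥ (-w) = 0 by rw [Matrix.mulVec_neg, hAw, neg_zero])
      (fun i hi => by have := hwle i hi; simp; linarith)
    have hlt : c ⬝ᵥ (x' + δ • (-w)) < c ⬝ᵥ x' := by
      rw [dotProduct_add_smul]
      have h5 : c ⬝ᵥ (-w) = -(c ⬝ᵥ w) := dotProduct_neg c w
      rw [h5]
      nlinarith
    have := hx.2 _ hfeas
    linarith

/-- one step of support reduction along a direction in the kernel. -/
lemma reduce_one {A : Matrix (Fin m) (Fin d) ℝ} {b' : Fin m → ℝ} {c : Fin d → ℝ}
    {x' g : Fin d → ℝ} (hx : x' ∈ optSet A b' c) (hAg : A *ᵥ g = 0)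
    (hsupp0 : ∀ i, x' i = 0 → g i = 0) (hcg : c ⬝ᵥ g = 0) (hneg : ∃ i, g i < 0) :
    ∃ (t₁ : ℝ), 0 < t₁ ∧ (x' + t₁ • g) ∈ optSet A b' c ∧
      (Finset.univ.filter (fun i => (x' + t₁ • g) i ≠ 0)).card <
        (Finset.univ.filter (fun i => x' i ≠ 0)).card := by
  classical
  set P : Finset (Fin d) := Finset.univ.filter (fun i => g i < 0) with hP
  have hPne : P.Nonempty := by
    obtain ⟨i, hi⟩ := hneg
    exact ⟨i, Finset.mem_filter.2 ⟨Finset.mem_univ _, hi⟩⟩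
  obtain ⟨i₁, hi₁, hmin⟩ := Finset.exists_min_image P (fun i => x' i / (-g i)) hPne
  have hgi₁ : g i₁ < 0 := (Finset.mem_filter.1 hi₁).2
  have hxpos : ∀ i ∈ P, 0 < x' i := by
    intro i hi
    have hgi : g i < 0 := (Finset.mem_filter.1 hi).2
    rcases lt_or_eq_of_le (hx.1.2 i) with h | h
    · exact h
    · exfalso
      have := hsupp0 i h.symm
      linarith
  set t₁ : ℝ := x' i₁ / (-g i₁) with ht₁
  have ht₁pos : 0 < t₁ := div_pos (hxpos i₁ hi₁) (by linarith)
  have hfeas : (x' + t₁ • g) ∈ feasSet A b' := by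
    refine ⟨?_, ?_⟩
    · rw [Matrix.mulVec_add, Matrix.mulVec_smul, hAg, smul_zero, add_zero]
      exact hx.1.1
    intro i
    simp only [Pi.add_apply, Pi.smul_apply, smul_eq_mul]
    by_cases hgi : g i < 0
    · have h1 := hmin i (Finset.mem_filter.2 ⟨Finset.mem_univ _, hgi⟩)
      have h2 : t₁ * (-g i) ≤ (x' i / (-g i)) * (-g i) :=
        mul_le_mul_of_nonneg_right h1 (by linarith)
      rw [div_mul_cancel₀ _ (by linarith : -g i ≠ 0)] at h2
      linarith
    · push_neg at hgi
      have := hx.1.2 i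
      nlinarith
  have hcost : c ⬝ᵥ (x' + t₁ • g) = c ⬝ᵥ x' := by
    rw [dotProduct_add_smul, hcg, mul_zero, add_zero]
  have hopt : (x' + t₁ • g) ∈ optSet A b' c := by
    refine ⟨hfeas, fun y hy => ?_⟩
    rw [hcost]
    exact hx.2 y hy
  refine ⟨t₁, ht₁pos, hopt, ?_⟩
  apply Finset.card_lt_card
  constructor
  · intro i hi
    simp only [Finset.mem_filter, Finset.mem_univ, true_and] at hi ⊢
    intro hxi
    refine hi ?_
    simp only [Pi.add_apply, Pi.smul_apply, smul_eq_mul, hxi, hsupp0 i hxi,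
      mul_zero, add_zero]
  · intro hss
    have hi₁mem : i₁ ∈ Finset.univ.filter (fun i => x' i ≠ 0) := by
      simp only [Finset.mem_filter, Finset.mem_univ, true_and]
      exact (hxpos i₁ hi₁).ne'
    have := hss hi₁mem
    simp only [Finset.mem_filter, Finset.mem_univ, true_and] at this
    refine this ?_
    simp only [Pi.add_apply, Pi.smul_apply, smul_eq_mul]
    have h5 : t₁ * (-g i₁) = x' i₁ := by
      rw [ht₁]
      exact div_mul_cancel₀ _ (by linarith : -g i₁ ≠ 0)
    linarith

end AuxLP3


section AuxLP4

variable {A : Matrix (Fin m) (Fin d) ℝ}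

/-- base case: independent support yields a dual feasible basis representation. -/
lemma det_base {b b' : Fin m → ℝ} {c : Fin d → ℝ} {xstar : Fin d → ℝ}
    (hA : A.rank = m)
    (Hbad : ∀ e, DualFeasibleBasis A c e → (∀ i, 0 ≤ basicSol A e b' i) →
      basicSol A e b = xstar)
    (Hgood : ∀ e, DualFeasibleBasis A c e → basicSol A e b = xstar →
      ∀ i, 0 < xstar i → 0 < basicSol A e b' i)
    {x' : Fin d → ℝ} (hx : x' ∈ optSet A b' c)
    (hind : IndepOn (fun i => Aᵀ i) (Finset.univ.filter (fun i => x' i ≠ 0))) :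
    (∀ i, (∀ e, DualFeasibleBasis A c e → basicSol A e b = xstar →
        i ∉ Set.range e) → x' i = 0) ∧
      (∀ i, 0 < xstar i → 0 < x' i) := by
  classical
  obtain ⟨l, hl, hltight⟩ := exists_tight_dual hx
  have htightF : ∀ i ∈ Finset.univ.filter (fun i => x' i ≠ 0), (Aᵀ *ᵥ l) i = c i := by
    intro i hi
    exact hltight i (Finset.mem_filter.1 hi).2
  obtain ⟨e, hdfb, hrange⟩ := exists_dual_feasible_basis hA m _ l
    (Nat.sub_le _ _) hl htightF hind
  have hxe : x' = basicSol A e b' := by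
    refine eq_basicSol hdfb.1.1.injective hdfb.1.2 (fun i hi => ?_) hx.1.1
    by_contra hxi
    exact hi (hrange i (Finset.mem_filter.2 ⟨Finset.mem_univ _, hxi⟩))
  have hxstar : basicSol A e b = xstar := by
    refine Hbad e hdfb (fun i => ?_)
    rw [← hxe]
    exact hx.1.2 i
  constructor
  · intro i hTZ
    rw [hxe]
    exact basicSol_eq_zero A e b' (hTZ e hdfb hxstar)
  · intro i hpos
    rw [hxe]
    exact Hgood e hdfb hxstar i hpos

lemma det_key {b b' : Fin m → ℝ} {c : Fin d → ℝ} {xstar : Fin d → ℝ}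
    (hA : A.rank = m)
    (hrec : ∀ r : Fin d → ℝ, A *ᵥ r = 0 → (∀ i, 0 ≤ r i) → c ⬝ᵥ r ≤ 0 → r = 0)
    (Hbad : ∀ e, DualFeasibleBasis A c e → (∀ i, 0 ≤ basicSol A e b' i) →
      basicSol A e b = xstar)
    (Hgood : ∀ e, DualFeasibleBasis A c e → basicSol A e b = xstar →
      ∀ i, 0 < xstar i → 0 < basicSol A e b' i) :
    ∀ (n : ℕ) (x' : Fin d → ℝ), x' ∈ optSet A b' c →
      (Finset.univ.filter (fun i => x' i ≠ 0)).card ≤ n →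
      (∀ i, (∀ e, DualFeasibleBasis A c e → basicSol A e b = xstar →
          i ∉ Set.range e) → x' i = 0) ∧
        (∀ i, 0 < xstar i → 0 < x' i) := by
  classical
  intro n
  induction n with
  | zero =>
    intro x' hx hcard
    refine det_base hA Hbad Hgood hx ?_
    intro g hgsupp _ i
    refine hgsupp i ?_
    have hempty : Finset.univ.filter (fun i => x' i ≠ 0) = ∅ :=
      Finset.card_eq_zero.1 (Nat.le_zero.1 hcard)
    rw [hempty]
    exact Finset.notMem_empty i
  | succ n ih =>
    intro x' hx hcard
    by_cases hind : IndepOn (fun i => Aᵀ i) (Finset.univ.filter (fun i => x' i ≠ 0))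
    · exact det_base hA Hbad Hgood hx hind
    · simp only [IndepOn, not_forall] at hind
      obtain ⟨g, hgsupp, hgsum, i₀, hgi₀⟩ := hind
      have hAg : A *ᵥ g = 0 := by
        funext k
        have h1 := congrFun hgsum k
        rw [Finset.sum_apply] at h1
        simp only [Pi.smul_apply, smul_eq_mul, Pi.zero_apply] at h1 ⊢
        rw [show (A *ᵥ g) k = ∑ i, A k i * g i from rfl]
        rw [← h1]
        exact Finset.sum_congr rfl fun i _ => by
          rw [Matrix.transpose_apply]; ring
      have hsupp0 : ∀ i, x' i = 0 → g i = 0 := by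
        intro i hxi
        refine hgsupp i ?_
        simp [hxi]
      have hcg : c ⬝ᵥ g = 0 := by
        obtain ⟨δ₁, hδ₁, hfeas₁⟩ := exists_feas_perturb hx.1 hAg
          (fun i hi => le_of_eq (hsupp0 i hi).symm)
        obtain ⟨δ₂, hδ₂, hfeas₂⟩ := exists_feas_perturb hx.1
          (show A *ᵥ (-g) = 0 by rw [Matrix.mulVec_neg, hAg, neg_zero])
          (fun i hi => by rw [Pi.neg_apply, hsupp0 i hi, neg_zero])
        have h1 := hx.2 _ hfeas₁
        have h2 := hx.2 _ hfeas₂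
        rw [dotProduct_add_smul] at h1 h2
        rw [dotProduct_neg] at h2
        nlinarith
      have hneg : ∃ i, g i < 0 := by
        by_contra h
        push_neg at h
        have := hrec g hAg h (le_of_eq hcg)
        rw [this] at hgi₀
        exact hgi₀ rfl
      have hpos : ∃ i, (-g) i < 0 := by
        by_contra h
        push_neg at h
        have hge : ∀ i, 0 ≤ (-g) i := by
          intro i
          have := h i
          simp only [Pi.neg_apply] at this ⊢
          linarith [this]
        have := hrec (-g) (by rw [Matrix.mulVec_neg, hAg, neg_zero]) hge
          (by rw [dotProduct_neg, hcg, neg_zero])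
        have h3 := congrFun this i₀
        simp only [Pi.neg_apply, Pi.zero_apply, neg_eq_zero] at h3
        exact hgi₀ h3
      obtain ⟨t₁, ht₁, hopt₁, hcard₁⟩ := reduce_one hx hAg hsupp0 hcg hneg
      obtain ⟨t₂, ht₂, hopt₂, hcard₂⟩ := reduce_one hx
        (show A *ᵥ (-g) = 0 by rw [Matrix.mulVec_neg, hAg, neg_zero])
        (fun i hi => by rw [Pi.neg_apply, hsupp0 i hi, neg_zero])
        (by rw [dotProduct_neg, hcg, neg_zero]) hpos
      obtain ⟨hz₁, hp₁⟩ := ih _ hopt₁ (by omega)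
      obtain ⟨hz₂, hp₂⟩ := ih _ hopt₂ (by omega)
      have hsumt : 0 < t₁ + t₂ := by linarith
      have hcomb : ∀ i, x' i = (t₂ / (t₁ + t₂)) * (x' + t₁ • g) i
          + (t₁ / (t₁ + t₂)) * (x' + t₂ • (-g)) i := by
        intro i
        simp only [Pi.add_apply, Pi.smul_apply, Pi.neg_apply, smul_eq_mul]
        field_simp
        ring
      constructor
      · intro i hTZ
        rw [hcomb i, hz₁ i hTZ, hz₂ i hTZ, mul_zero, mul_zero, add_zero]
      · intro i hposi
        rw [hcomb i]
        have := hp₁ i hposi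
        have := hp₂ i hposi
        have h4 : 0 < t₂ / (t₁ + t₂) := div_pos ht₂ hsumt
        have h5 : 0 < t₁ / (t₁ + t₂) := div_pos ht₁ hsumt
        positivity

end AuxLP4


section AuxLP5

variable {A : Matrix (Fin m) (Fin d) ℝ}

lemma continuous_basicSol (e : Fin m → Fin d) :
    Continuous (fun v : Fin m → ℝ => basicSol A e v) := by
  refine continuous_pi fun i => ?_
  unfold basicSol
  refine continuous_finset_sum _ fun j _ => ?_
  by_cases h : e j = i
  · simp only [if_pos h]
    rw [show (fun v : Fin m → ℝ => ((subMat A e)⁻¹ *ᵥ v) j)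
      = fun v => ∑ k, (subMat A e)⁻¹ j k * v k from rfl]
    exact continuous_finset_sum _ fun k _ => continuous_const.mul (continuous_apply k)
  · simp only [if_neg h]
    exact continuous_const

lemma det_eps (hm : 1 ≤ m) (hmd : m ≤ d) (hA : A.rank = m)
    {b : Fin m → ℝ} {c : Fin d → ℝ} {xstar : Fin d → ℝ}
    (hunique : optSet A b c = {xstar}) :
    ∃ ε : ℝ, 0 < ε ∧ ∀ b' : Fin m → ℝ, dist b' b < ε → ∀ x' ∈ optSet A b' c,
      (∀ i, (∀ e, DualFeasibleBasis A c e → basicSol A e b = xstar →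
          i ∉ Set.range e) → x' i = 0) ∧
        (∀ i, 0 < xstar i → 0 < x' i) := by
  classical
  have hxopt : xstar ∈ optSet A b c := by
    rw [hunique]
    exact Set.mem_singleton _
  have hrec : ∀ r : Fin d → ℝ, A *ᵥ r = 0 → (∀ i, 0 ≤ r i) → c ⬝ᵥ r ≤ 0 → r = 0 := by
    intro r hAr hr hcr
    have hfeas : xstar + r ∈ feasSet A b :=
      ⟨by rw [Matrix.mulVec_add, hAr, add_zero]; exact hxopt.1.1,
        fun i => add_nonneg (hxopt.1.2 i) (hr i)⟩
    have hcost : c ⬝ᵥ (xstar + r) = c ⬝ᵥ xstar + c ⬝ᵥ r := dotProduct_add _ _ _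
    have hge := hxopt.2 _ hfeas
    have hcr0 : c ⬝ᵥ r = 0 := le_antisymm hcr (by rw [hcost] at hge; linarith)
    have hopt2 : xstar + r ∈ optSet A b c :=
      ⟨hfeas, fun y hy => by rw [hcost, hcr0, add_zero]; exact hxopt.2 y hy⟩
    rw [hunique] at hopt2
    have h6 := Set.mem_singleton_iff.1 hopt2
    funext i
    have h7 := congrFun h6 i
    simp only [Pi.add_apply, Pi.zero_apply] at h7 ⊢
    linarith
  have hE : ∀ e : Fin m → Fin d, ∃ ε : ℝ, 0 < ε ∧
      (DualFeasibleBasis A c e → basicSol A e b ≠ xstar →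
        ∀ b', dist b' b < ε → ¬(∀ i, 0 ≤ basicSol A e b' i)) ∧
      (DualFeasibleBasis A c e → basicSol A e b = xstar →
        ∀ b', dist b' b < ε → ∀ i, 0 < xstar i → 0 < basicSol A e b' i) := by
    intro e
    by_cases hdfb : DualFeasibleBasis A c e
    · by_cases hgood : basicSol A e b = xstar
      · set U : Set (Fin m → ℝ) := {v | ∀ i, 0 < xstar i → 0 < basicSol A e v i}
        have hUopen : IsOpen U := by
          have hU2 : U = ⋂ i : Fin d, {v | 0 < xstar i → 0 < basicSol A e v i} := by
            ext v
            simp [U, Set.mem_iInter]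
          rw [hU2]
          refine isOpen_iInter_of_finite fun i => ?_
          by_cases hp : 0 < xstar i
          · have h3 : {v : Fin m → ℝ | 0 < xstar i → 0 < basicSol A e v i}
                = {v | 0 < basicSol A e v i} := by
              ext v
              simp [hp]
            rw [h3]
            exact isOpen_lt continuous_const
              ((continuous_apply i).comp (continuous_basicSol e))
          · have h3 : {v : Fin m → ℝ | 0 < xstar i → 0 < basicSol A e v i}
                = Set.univ := by
              ext v
              simp [hp]
            rw [h3]
            exact isOpen_univ
        have hbU : b ∈ U := by
          intro i hi
          rw [hgood]
          exact hi
        obtain ⟨ε, hεpos, hball⟩ := Metric.isOpen_iff.1 hUopen b hbU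
        exact ⟨ε, hεpos, fun _ h => absurd hgood h,
          fun _ _ b' hb' i hi => hball (Metric.mem_ball.2 hb') i hi⟩
      · have hjneg : ∃ j, ((subMat A e)⁻¹ *ᵥ b) j < 0 := by
          by_contra hcon
          push_neg at hcon
          have hnn : ∀ i, 0 ≤ basicSol A e b i := basicSol_nonneg hcon
          have h8 := basicSol_mem_optSet hdfb hnn
          rw [hunique] at h8
          exact hgood (Set.mem_singleton_iff.1 h8)
        obtain ⟨j, hj⟩ := hjneg
        have hcont : Continuous (fun v : Fin m → ℝ => ((subMat A e)⁻¹ *ᵥ v) j) := by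
          rw [show (fun v : Fin m → ℝ => ((subMat A e)⁻¹ *ᵥ v) j)
            = fun v => ∑ k, (subMat A e)⁻¹ j k * v k from rfl]
          exact continuous_finset_sum _ fun k _ =>
            continuous_const.mul (continuous_apply k)
        have hUopen : IsOpen {v : Fin m → ℝ | ((subMat A e)⁻¹ *ᵥ v) j < 0} :=
          isOpen_lt hcont continuous_const
        obtain ⟨ε, hεpos, hball⟩ := Metric.isOpen_iff.1 hUopen b hj
        refine ⟨ε, hεpos, fun _ _ b' hb' hall => ?_, fun _ h => absurd h hgood⟩
        have h9 : ((subMat A e)⁻¹ *ᵥ b') j < 0 := hball (Metric.mem_ball.2 hb')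
        have h10 := hall (e j)
        rw [basicSol_apply A hdfb.1.1.injective b' j] at h10
        linarith
    · exact ⟨1, one_pos, fun h => absurd h hdfb, fun h => absurd h hdfb⟩
  choose E hEpos hEbad hEgood using hE
  haveI : Nonempty (Fin m → Fin d) := ⟨fun _ => ⟨0, by omega⟩⟩
  refine ⟨Finset.univ.inf' Finset.univ_nonempty E, ?_, ?_⟩
  · rw [Finset.lt_inf'_iff]
    exact fun e _ => hEpos e
  · intro b' hb' x' hx
    have hdistE : ∀ e, dist b' b < E e := fun e =>
      lt_of_lt_of_le hb' (Finset.inf'_le _ (Finset.mem_univ e))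
    refine det_key hA hrec ?_ ?_ _ x' hx le_rfl
    · intro e hdfb hprim
      by_contra hne
      exact hEbad e hdfb hne b' (hdistE e) hprim
    · intro e hdfb hgood i hi
      exact hEgood e hdfb hgood b' (hdistE e) i hi

end AuxLP5


open MeasureTheory Filter Topology

/-- Convergence in distribution (weak convergence of pushforward laws),
characterized via bounded continuous test functions. -/
def TendstoInDistribution {Ω E : Type*} [MeasurableSpace Ω] (P : Measure Ω)
    [TopologicalSpace E] (X : ℕ → Ω → E) (Y : Ω → E) : Prop :=
  ∀ f : BoundedContinuousFunction E ℝ,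
    Tendsto (fun n => ∫ ω, f (X n ω) ∂P) atTop (𝓝 (∫ ω, f (Y ω) ∂P))

section AuxProb

variable {Ω : Type*} [MeasurableSpace Ω]

/-- convergence in probability of `b n` to `b` from the distributional limit of
`r n • (b n - b)` with `r n → ∞`. -/
lemma tendsto_prob_dist (P : Measure Ω) [IsProbabilityMeasure P]
    {bn : ℕ → Ω → Fin m → ℝ} (hbn : ∀ n, Measurable (bn n)) (b : Fin m → ℝ)
    {rn : ℕ → ℝ} (hrnpos : ∀ n, 0 < rn n) (hrn : Tendsto rn atTop atTop)
    {G : Ω → Fin m → ℝ} (hG : Measurable G)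
    (hclt : TendstoInDistribution P (fun n ω => rn n • (bn n ω - b)) G)
    {ε : ℝ} (hε : 0 < ε) :
    Tendsto (fun n => P {ω | ε ≤ dist (bn n ω) b}) atTop (𝓝 0) := by
  classical
  rw [ENNReal.tendsto_atTop_zero]
  intro δ hδ
  obtain ⟨η, hη0, hηδ⟩ : ∃ η : ℝ, 0 < η ∧ ENNReal.ofReal η ≤ δ := by
    rcases eq_or_ne δ ⊤ with h | h
    · exact ⟨1, one_pos, by simp [h]⟩
    · refine ⟨δ.toReal / 2, by have := ENNReal.toReal_pos hδ.ne' h; linarith, ?_⟩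
      calc ENNReal.ofReal (δ.toReal / 2) ≤ ENNReal.ofReal δ.toReal :=
            ENNReal.ofReal_le_ofReal (by linarith [ENNReal.toReal_pos hδ.ne' h])
        _ = δ := ENNReal.ofReal_toReal h
  -- choose a threshold M with P(‖G‖ ≥ M) ≤ η/2
  have hGnorm : Measurable fun ω => ‖G ω‖ := continuous_norm.measurable.comp hG
  have hA : ∀ k : ℕ, MeasurableSet {ω | (k : ℝ) ≤ ‖G ω‖} :=
    fun k => measurableSet_le measurable_const hGnorm
  have hAanti : Antitone fun k : ℕ => {ω | (k : ℝ) ≤ ‖G ω‖} := by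
    intro k k' hk ω hω
    simp only [Set.mem_setOf_eq] at hω ⊢
    calc (k : ℝ) ≤ (k' : ℝ) := by exact_mod_cast hk
      _ ≤ ‖G ω‖ := hω
  have hAempty : ⋂ k : ℕ, {ω | (k : ℝ) ≤ ‖G ω‖} = ∅ := by
    ext ω
    simp only [Set.mem_iInter, Set.mem_setOf_eq, Set.mem_empty_iff_false, iff_false,
      not_forall, not_le]
    obtain ⟨k, hk⟩ := exists_nat_gt ‖G ω‖
    exact ⟨k, hk⟩
  have hAtend : Tendsto (fun k : ℕ => P {ω | (k : ℝ) ≤ ‖G ω‖}) atTop (𝓝 0) := by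
    have := tendsto_measure_iInter_atTop (μ := P)
      (fun k => (hA k).nullMeasurableSet) hAanti ⟨0, measure_ne_top _ _⟩
    rw [hAempty] at this
    simpa [Function.comp_def] using this
  obtain ⟨M, hM⟩ : ∃ M : ℕ, P {ω | (M : ℝ) ≤ ‖G ω‖} ≤ ENNReal.ofReal (η / 2) := by
    have h2 := (ENNReal.tendsto_atTop_zero.1 hAtend) (ENNReal.ofReal (η / 2))
      (by simp [ENNReal.ofReal_pos]; linarith)
    obtain ⟨N, hN⟩ := h2
    exact ⟨N, hN N le_rfl⟩
  -- the bump function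
  set g : (Fin m → ℝ) → ℝ := fun x => max 0 (min 1 (‖x‖ - M)) with hg
  have hgcont : Continuous g :=
    continuous_const.max ((continuous_const.min (continuous_norm.sub continuous_const)))
  have hgbd : ∀ x, ‖g x‖ ≤ 1 := by
    intro x
    rw [Real.norm_eq_abs, abs_le]
    constructor
    · have : (0:ℝ) ≤ max 0 (min 1 (‖x‖ - M)) := le_max_left _ _
      linarith
    · rw [hg]
      simp only [max_le_iff]
      constructor
      · norm_num
      · exact le_trans (min_le_left _ _) le_rfl
  set f : BoundedContinuousFunction (Fin m → ℝ) ℝ :=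
    BoundedContinuousFunction.ofNormedAddCommGroup g hgcont 1 hgbd with hf
  have hfval : ∀ x, f x = g x := fun x => rfl
  have hg0 : ∀ x, 0 ≤ g x := fun x => le_max_left _ _
  have hg1 : ∀ x, g x ≤ 1 := by
    intro x
    rw [hg]
    simp only [max_le_iff]
    exact ⟨by norm_num, le_trans (min_le_left _ _) le_rfl⟩
  have hgone : ∀ x : Fin m → ℝ, (M : ℝ) + 1 ≤ ‖x‖ → g x = 1 := by
    intro x hx
    rw [hg]
    dsimp only
    rw [min_eq_left (by linarith), max_eq_right (by linarith)]
  have hgzero : ∀ x : Fin m → ℝ, ‖x‖ < M → g x = 0 := by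
    intro x hx
    rw [hg]
    dsimp only
    rw [min_eq_right (by linarith), max_eq_left (by linarith)]
  -- integrability facts
  have hGn_meas : ∀ n, Measurable fun ω => rn n • (bn n ω - b) :=
    fun n => ((hbn n).sub measurable_const).const_smul (rn n)
  have hintf : ∀ (X : Ω → Fin m → ℝ), Measurable X →
      MeasureTheory.Integrable (fun ω => f (X ω)) P := by
    intro X hX
    refine MeasureTheory.Integrable.mono' (MeasureTheory.integrable_const 1)
      ((hgcont.measurable.comp hX).aestronglyMeasurable) ?_
    filter_upwards with ω
    exact hgbd (X ω)
  -- ∫ f(G) ≤ η/2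
  have hintG : ∫ ω, f (G ω) ∂P ≤ η / 2 := by
    have hmono : ∀ ω, f (G ω) ≤
        ({ω | (M : ℝ) ≤ ‖G ω‖}).indicator (fun _ => (1:ℝ)) ω := by
      intro ω
      rw [hfval]
      by_cases hω : ω ∈ {ω : Ω | (M : ℝ) ≤ ‖G ω‖}
      · rw [Set.indicator_of_mem hω]
        exact hg1 _
      · rw [Set.indicator_of_notMem hω]
        simp only [Set.mem_setOf_eq, not_le] at hω
        rw [hgzero _ hω]
    have hint_ind : MeasureTheory.Integrable
        (({ω | (M : ℝ) ≤ ‖G ω‖}).indicator (fun _ => (1:ℝ))) P :=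
      (MeasureTheory.integrable_const 1).indicator (hA M)
    calc ∫ ω, f (G ω) ∂P
        ≤ ∫ ω, ({ω | (M : ℝ) ≤ ‖G ω‖}).indicator (fun _ => (1:ℝ)) ω ∂P :=
          MeasureTheory.integral_mono (hintf G hG) hint_ind hmono
      _ = (P {ω | (M : ℝ) ≤ ‖G ω‖}).toReal • (1:ℝ) :=
          MeasureTheory.integral_indicator_const (1:ℝ) (hA M)
      _ ≤ η / 2 := by
          rw [smul_eq_mul, mul_one]
          calc (P {ω | (M : ℝ) ≤ ‖G ω‖}).toReal
              ≤ (ENNReal.ofReal (η / 2)).toReal :=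
                ENNReal.toReal_mono ENNReal.ofReal_ne_top hM
            _ = η / 2 := ENNReal.toReal_ofReal (by linarith)
  -- eventually bounds
  have hev1 : ∀ᶠ n in atTop, ∫ ω, f (rn n • (bn n ω - b)) ∂P < η / 2 + η / 2 := by
    refine (hclt f).eventually_lt_const ?_
    linarith
  have hev2 : ∀ᶠ n in atTop, ((M : ℝ) + 1) / ε ≤ rn n := hrn.eventually_ge_atTop _
  rw [Filter.eventually_atTop] at hev1 hev2
  obtain ⟨N1, hN1⟩ := hev1
  obtain ⟨N2, hN2⟩ := hev2
  refine ⟨max N1 N2, fun n hn => ?_⟩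
  have hn1 := hN1 n (le_trans (le_max_left _ _) hn)
  have hn2 := hN2 n (le_trans (le_max_right _ _) hn)
  -- the event is contained in {‖Gn‖ ≥ M + 1}
  have hsubset : {ω | ε ≤ dist (bn n ω) b} ⊆
      {ω | (M : ℝ) + 1 ≤ ‖rn n • (bn n ω - b)‖} := by
    intro ω hω
    simp only [Set.mem_setOf_eq] at hω ⊢
    rw [norm_smul, Real.norm_eq_abs, abs_of_pos (hrnpos n)]
    have hd : dist (bn n ω) b = ‖bn n ω - b‖ := dist_eq_norm _ _
    rw [hd] at hω
    have h3 : ((M : ℝ) + 1) / ε * ε ≤ rn n * ‖bn n ω - b‖ := by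
      apply mul_le_mul hn2 hω (le_of_lt hε)
      linarith [hrnpos n]
    rw [div_mul_cancel₀ _ hε.ne'] at h3
    exact h3
  have hBn_meas : MeasurableSet {ω | (M : ℝ) + 1 ≤ ‖rn n • (bn n ω - b)‖} :=
    measurableSet_le measurable_const (continuous_norm.measurable.comp (hGn_meas n))
  -- bound the probability via the integral of f
  have hind_le : ∀ ω, ({ω | (M : ℝ) + 1 ≤ ‖rn n • (bn n ω - b)‖}).indicator
      (fun _ => (1:ℝ)) ω ≤ f (rn n • (bn n ω - b)) := by
    intro ω
    rw [hfval]
    by_cases hω : ω ∈ {ω : Ω | (M : ℝ) + 1 ≤ ‖rn n • (bn n ω - b)‖}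
    · rw [Set.indicator_of_mem hω, hgone _ hω]
    · rw [Set.indicator_of_notMem hω]
      exact hg0 _
  have hPn : (P {ω | (M : ℝ) + 1 ≤ ‖rn n • (bn n ω - b)‖}).toReal ≤ η := by
    have h4 : (P {ω | (M : ℝ) + 1 ≤ ‖rn n • (bn n ω - b)‖}).toReal
        = ∫ ω, ({ω | (M : ℝ) + 1 ≤ ‖rn n • (bn n ω - b)‖}).indicator
            (fun _ => (1:ℝ)) ω ∂P := by
      rw [MeasureTheory.integral_indicator_const (1:ℝ) hBn_meas, smul_eq_mul, mul_one, measureReal_def]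
    rw [h4]
    calc ∫ ω, ({ω | (M : ℝ) + 1 ≤ ‖rn n • (bn n ω - b)‖}).indicator
          (fun _ => (1:ℝ)) ω ∂P
        ≤ ∫ ω, f (rn n • (bn n ω - b)) ∂P :=
          MeasureTheory.integral_mono
            ((MeasureTheory.integrable_const 1).indicator hBn_meas)
            (hintf _ (hGn_meas n)) hind_le
      _ ≤ η := by linarith
  calc P {ω | ε ≤ dist (bn n ω) b}
      ≤ P {ω | (M : ℝ) + 1 ≤ ‖rn n • (bn n ω - b)‖} := measure_mono hsubset
    _ ≤ ENNReal.ofReal η := by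
        rw [← ENNReal.ofReal_toReal (measure_ne_top P _)]
        exact ENNReal.ofReal_le_ofReal hPn
    _ ≤ δ := hηδ

/-- abstract limit lemma: events containing the intersection of a measurable
high-probability event and an arbitrary high-probability event. -/
lemma tendsto_prob_one (P : Measure Ω) [IsProbabilityMeasure P]
    {S F T : ℕ → Set Ω} (hSmeas : ∀ n, MeasurableSet (S n))
    (hScompl : Tendsto (fun n => P (S n)ᶜ) atTop (𝓝 0))
    (hF : Tendsto (fun n => P (F n)) atTop (𝓝 1))
    (hT : ∀ n, S n ∩ F n ⊆ T n) :
    Tendsto (fun n => P (T n)) atTop (𝓝 1) := by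
  rw [ENNReal.tendsto_nhds ENNReal.one_ne_top]
  intro ε hε
  have hε2 : 0 < ε / 2 := ENNReal.half_pos hε.ne'
  have hev1 : ∀ᶠ n in atTop, P (F n) ∈ Set.Icc (1 - ε / 2) (1 + ε / 2) :=
    (ENNReal.tendsto_nhds ENNReal.one_ne_top).1 hF (ε / 2) hε2
  have hev2 : ∀ᶠ n in atTop, P (S n)ᶜ < ε / 2 := hScompl.eventually_lt_const hε2
  filter_upwards [hev1, hev2] with n h1 h2
  constructor
  · -- 1 - ε ≤ P (T n)
    rw [tsub_le_iff_right]
    have k1 : (1:ENNReal) ≤ P (F n) + ε / 2 := by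
      have := h1.1
      rwa [tsub_le_iff_right] at this
    have k2 : P (F n) ≤ P (T n) + ε / 2 := by
      calc P (F n) ≤ P (F n ∩ S n) + P (F n \ S n) :=
            measure_le_inter_add_diff P _ _
        _ ≤ P (T n) + P (S n)ᶜ := by
            refine add_le_add (measure_mono ?_) (measure_mono ?_)
            · intro ω hω
              exact hT n ⟨hω.2, hω.1⟩
            · intro ω hω
              exact hω.2
        _ ≤ P (T n) + ε / 2 := add_le_add le_rfl h2.le
    calc (1:ENNReal) ≤ P (F n) + ε / 2 := k1
      _ ≤ P (T n) + ε / 2 + ε / 2 := add_le_add k2 le_rfl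
      _ = P (T n) + ε := by rw [add_assoc, ENNReal.add_halves]
  · exact le_trans prob_le_one le_self_add

end AuxProb


/-- Theorem 3.5 (first part): assume (A2) uniqueness of the optimal solution
`x = x*(b)`, (B1) and (B2). With `Pos(x) = {i : x_i > 0}` and `TZ(x)` the set of
coordinates belonging to no dual feasible basis inducing `x`, any measurable
choice `x*(b_n)` of an optimal solution satisfies
`ℙ(x*(b_n)_i = 0 ∀ i ∈ TZ(x)) → 1` and `ℙ(x*(b_n)_i > 0 ∀ i ∈ Pos(x)) → 1`. -/
theorem stmt9 {Ω : Type*} [MeasurableSpace Ω] (P : Measure Ω) [IsProbabilityMeasure P]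
    (hm : 1 ≤ m) (hmd : m ≤ d)
    (A : Matrix (Fin m) (Fin d) ℝ) (hA : A.rank = m)
    (b : Fin m → ℝ) (c : Fin d → ℝ)
    (xstar : Fin d → ℝ) (hunique : optSet A b c = {xstar})
    (bn : ℕ → Ω → Fin m → ℝ) (hbn : ∀ n, Measurable (bn n))
    (rn : ℕ → ℝ) (hrnpos : ∀ n, 0 < rn n) (hrn : Tendsto rn atTop atTop)
    (G : Ω → Fin m → ℝ) (hG : Measurable G)
    (hclt : TendstoInDistribution P (fun n ω => rn n • (bn n ω - b)) G)
    (habs : Measure.map G P ≪ (volume : Measure (Fin m → ℝ)))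
    (hfeas : Tendsto (fun n => P {ω | (optSet A (bn n ω) c).Nonempty}) atTop (𝓝 1))
    (xn : ℕ → Ω → Fin d → ℝ) (hxn : ∀ n, Measurable (xn n))
    (hxnopt : ∀ n ω, (optSet A (bn n ω) c).Nonempty → xn n ω ∈ optSet A (bn n ω) c) :
    Tendsto (fun n => P {ω | ∀ i : Fin d,
        (∀ e : Fin m → Fin d, DualFeasibleBasis A c e → basicSol A e b = xstar →
          i ∉ Set.range e) → xn n ω i = 0}) atTop (𝓝 1) ∧
    Tendsto (fun n => P {ω | ∀ i : Fin d, 0 < xstar i → 0 < xn n ω i})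
      atTop (𝓝 1) := by
  obtain ⟨ε, hεpos, hdet⟩ := det_eps hm hmd hA hunique
  set S : ℕ → Set Ω := fun n => {ω | dist (bn n ω) b < ε} with hS
  have hSmeas : ∀ n, MeasurableSet (S n) := by
    intro n
    have h1 : S n = bn n ⁻¹' (Metric.ball b ε) := by
      ext ω
      simp [hS, Metric.mem_ball]
    rw [h1]
    exact (hbn n) Metric.isOpen_ball.measurableSet
  have hScompl : Tendsto (fun n => P (S n)ᶜ) atTop (𝓝 0) := by
    have h1 := tendsto_prob_dist P hbn b hrnpos hrn hG hclt hεpos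
    have h2 : (fun n => P (S n)ᶜ) = fun n => P {ω | ε ≤ dist (bn n ω) b} := by
      funext n
      congr 1
      ext ω
      simp [hS, not_lt]
    rw [h2]
    exact h1
  have key : ∀ n ω, ω ∈ S n ∩ {ω | (optSet A (bn n ω) c).Nonempty} →
      ((∀ i, (∀ e, DualFeasibleBasis A c e → basicSol A e b = xstar →
          i ∉ Set.range e) → xn n ω i = 0) ∧ (∀ i, 0 < xstar i → 0 < xn n ω i)) := by
    intro n ω hω
    exact hdet (bn n ω) hω.1 (xn n ω) (hxnopt n ω hω.2)
  constructor
  · exact tendsto_prob_one P hSmeas hScompl hfeas (fun n ω hω => (key n ω hω).1)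
  · exact tendsto_prob_one P hSmeas hScompl hfeas (fun n ω hω => (key n ω hω).2)

end
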